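/- arXiv:2506.14749 — 4 statements merged into one kernel-verified Lean document; each statement's English description precedes it below -/
import Mathlib

section
/- Let Σ be a symmetric positive definite d×d real matrix, a ∈ ℝᵈ, b_coef ∈ ℝ, w₀, w₁ ∈ ℝᵈ, and η ≥ 0, ε ≥ 0. Suppose aᵀw₀ + b_coef − √(aᵀ Σ a) − (η + ε)·‖a‖₂ ≥ 0 and aᵀw₁ + b_coef − √(aᵀ Σ a) − (η + ε)·‖a‖₂ ≥ 0. Then for every point c ∈ ℝᵈ lying within Euclidean distance η of the line segment from w₀ to w₁ and every p ∈ ℝᵈ with (p−c)ᵀ Σ⁻¹ (p−c) ≤ 1, it holds that aᵀp + b_coef ≥ ε·‖a‖₂. -/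
open Matrix

lemma matSymmDot {d : ℕ} (M : Matrix (Fin d) (Fin d) ℝ) (hM : M.IsHermitian)
    (u v : Fin d → ℝ) : u ⬝ᵥ (M *ᵥ v) = v ⬝ᵥ (M *ᵥ u) := by
  calc u ⬝ᵥ (M *ᵥ v) = (Mᵀ *ᵥ u) ⬝ᵥ v := by rw [dotProduct_mulVec, mulVec_transpose]
    _ = (M *ᵥ u) ⬝ᵥ v := by rw [← conjTranspose_eq_transpose_of_trivial, hM.eq]
    _ = v ⬝ᵥ (M *ᵥ u) := dotProduct_comm _ _

lemma matCS {d : ℕ} (M : Matrix (Fin d) (Fin d) ℝ) (hM : M.PosSemidef)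
    (x y : Fin d → ℝ) :
    (x ⬝ᵥ (M *ᵥ y)) ^ 2 ≤ (x ⬝ᵥ (M *ᵥ x)) * (y ⬝ᵥ (M *ᵥ y)) := by
  have hq : ∀ t : ℝ, 0 ≤ (y ⬝ᵥ (M *ᵥ y)) * (t * t) +
      (-2 * (x ⬝ᵥ (M *ᵥ y))) * t + (x ⬝ᵥ (M *ᵥ x)) := by
    intro t
    have h0 := hM.dotProduct_mulVec_nonneg (x - t • y)
    simp only [star_trivial, sub_dotProduct, dotProduct_sub, mulVec_sub, mulVec_smul,
      smul_dotProduct, dotProduct_smul, smul_eq_mul] at h0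
    rw [← matSymmDot M hM.1 x y] at h0
    nlinarith [h0]
  have := discrim_le_zero hq
  rw [discrim] at this
  nlinarith [this]

/-- The Euclidean (2-)norm on `ℝᵈ`. -/
noncomputable def norm2 {d : ℕ} (x : Fin d → ℝ) : ℝ := Real.sqrt (∑ i, x i ^ 2)

/-- `c` lies within Euclidean distance `η` of the line segment from `a` to `b`. -/
def nearSegment {d : ℕ} (c a b : Fin d → ℝ) (η : ℝ) : Prop :=
  ∃ γ : ℝ, 0 ≤ γ ∧ γ ≤ 1 ∧ norm2 (c - (γ • a + (1 - γ) • b)) ≤ η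

lemma norm2_nonneg' {d : ℕ} (x : Fin d → ℝ) : 0 ≤ norm2 x := Real.sqrt_nonneg _

lemma abs_dot_le {d : ℕ} (a u : Fin d → ℝ) : |a ⬝ᵥ u| ≤ norm2 a * norm2 u := by
  have h := Finset.sum_mul_sq_le_sq_mul_sq Finset.univ a u
  have h2 : (a ⬝ᵥ u) ^ 2 ≤ (norm2 a * norm2 u) ^ 2 := by
    rw [mul_pow, norm2, norm2, Real.sq_sqrt (by positivity), Real.sq_sqrt (by positivity)]
    simpa [dotProduct] using h
  calc |a ⬝ᵥ u| = Real.sqrt ((a ⬝ᵥ u) ^ 2) := (Real.sqrt_sq_eq_abs _).symm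
    _ ≤ Real.sqrt ((norm2 a * norm2 u) ^ 2) := Real.sqrt_le_sqrt h2
    _ = norm2 a * norm2 u := Real.sqrt_sq (mul_nonneg (Real.sqrt_nonneg _) (Real.sqrt_nonneg _))

/-- **Lemma 2 of the paper.** If the halfspace-margin condition
`aᵀw + b - √(aᵀ S a) - (η+ε)‖a‖₂ ≥ 0` holds at both endpoints `w₀, w₁` of a segment,
then every point `p` of the ellipsoid with shape `S` centered at any point `c` of the
`η`-tube of the segment satisfies `aᵀp + b ≥ ε‖a‖₂`. -/
theorem halfspace_margin_along_tube (d : ℕ)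
    (S : Matrix (Fin d) (Fin d) ℝ) (hpd : S.PosDef)
    (a : Fin d → ℝ) (bc : ℝ) (w₀ w₁ : Fin d → ℝ)
    (η ε : ℝ) (hη : 0 ≤ η) (hε : 0 ≤ ε)
    (h₀ : a ⬝ᵥ w₀ + bc - Real.sqrt (a ⬝ᵥ (S *ᵥ a)) - (η + ε) * norm2 a ≥ 0)
    (h₁ : a ⬝ᵥ w₁ + bc - Real.sqrt (a ⬝ᵥ (S *ᵥ a)) - (η + ε) * norm2 a ≥ 0) :
    ∀ c : Fin d → ℝ, nearSegment c w₀ w₁ η →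
      ∀ p : Fin d → ℝ, (p - c) ⬝ᵥ (S⁻¹ *ᵥ (p - c)) ≤ 1 →
        a ⬝ᵥ p + bc ≥ ε * norm2 a := by
  rintro c ⟨γ, hγ0, hγ1, hdist⟩ p hp
  set q := a ⬝ᵥ (S *ᵥ a) with hq_def
  set N := norm2 a with hN_def
  set m := γ • w₀ + (1 - γ) • w₁ with hm_def
  set v := p - c with hv_def
  have hN0 : 0 ≤ N := norm2_nonneg' a
  have hq0 : 0 ≤ q := by simpa using hpd.posSemidef.dotProduct_mulVec_nonneg a
  -- key1 : -√q ≤ a ⬝ᵥ v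
  have hdet : S.det ≠ 0 := ne_of_gt hpd.det_pos
  have hSy : S *ᵥ (S⁻¹ *ᵥ v) = v := by
    rw [mulVec_mulVec, Matrix.mul_nonsing_inv _ (isUnit_iff_ne_zero.mpr hdet), one_mulVec]
  have hcs := matCS S hpd.posSemidef a (S⁻¹ *ᵥ v)
  rw [hSy] at hcs
  have hyv : (S⁻¹ *ᵥ v) ⬝ᵥ v = v ⬝ᵥ (S⁻¹ *ᵥ v) := dotProduct_comm _ _
  have hvv0 : 0 ≤ v ⬝ᵥ (S⁻¹ *ᵥ v) := by simpa using hpd.inv.posSemidef.dotProduct_mulVec_nonneg v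
  have hsq : (a ⬝ᵥ v) ^ 2 ≤ q := by
    calc (a ⬝ᵥ v) ^ 2 ≤ q * ((S⁻¹ *ᵥ v) ⬝ᵥ v) := hcs
      _ = q * (v ⬝ᵥ (S⁻¹ *ᵥ v)) := by rw [hyv]
      _ ≤ q * 1 := by exact mul_le_mul_of_nonneg_left hp hq0
      _ = q := mul_one q
  have key1 : -Real.sqrt q ≤ a ⬝ᵥ v := by
    have h1 := Real.abs_le_sqrt hsq
    have h2 := neg_abs_le (a ⬝ᵥ v)
    linarith
  -- key2 : -(N * η) ≤ a ⬝ᵥ (c - m)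
  have key2 : -(N * η) ≤ a ⬝ᵥ (c - m) := by
    have h := abs_dot_le a (c - m)
    have h2 : norm2 a * norm2 (c - m) ≤ N * η :=
      mul_le_mul_of_nonneg_left hdist hN0
    have := neg_abs_le (a ⬝ᵥ (c - m))
    linarith [h.trans h2]
  -- key3 : √q + (η+ε)*N ≤ a ⬝ᵥ m + bc
  have hdm : a ⬝ᵥ m = γ * (a ⬝ᵥ w₀) + (1 - γ) * (a ⬝ᵥ w₁) := by
    simp [hm_def, dotProduct_add, dotProduct_smul, smul_eq_mul]
  have key3 : Real.sqrt q + (η + ε) * N ≤ a ⬝ᵥ m + bc := by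
    rw [hdm]
    nlinarith [mul_nonneg hγ0 h₀, mul_nonneg (by linarith : (0:ℝ) ≤ 1 - γ) h₁]
  -- combine
  have hsplit : a ⬝ᵥ p = a ⬝ᵥ v + a ⬝ᵥ (c - m) + a ⬝ᵥ m := by
    rw [← dotProduct_add, ← dotProduct_add]
    congr 1
    rw [hv_def]
    abel
  rw [ge_iff_le, hsplit]
  nlinarith [key1, key2, key3]
end

section
/- Let Σ be a symmetric positive definite d×d real matrix, F an l×d real matrix with rows F₁,…,F_l, g ∈ ℝˡ, w₀, w₁ ∈ ℝᵈ, and η ≥ 0, ε ≥ 0. Suppose that for every row index r ∈ {1,…,l}: F_r w₀ + g_r + √(F_r Σ F_rᵀ) + (η + ε)·‖F_r‖₂ ≤ 0 and F_r w₁ + g_r + √(F_r Σ F_rᵀ) + (η + ε)·‖F_r‖₂ ≤ 0. Then for every point c ∈ ℝᵈ lying within Euclidean distance η of the line segment from w₀ to w₁ and every p ∈ ℝᵈ with (p−c)ᵀ Σ⁻¹ (p−c) ≤ 1, it holds that F_r p + g_r ≤ −ε·‖F_r‖₂ for every r ∈ {1,…,l}. -/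
open Matrix

lemma cs_psd {d : ℕ} {S : Matrix (Fin d) (Fin d) ℝ} (hS : S.PosSemidef)
    (u v : Fin d → ℝ) :
    (u ⬝ᵥ (S *ᵥ v))^2 ≤ (u ⬝ᵥ (S *ᵥ u)) * (v ⬝ᵥ (S *ᵥ v)) := by
  have hT : Sᵀ = S := by
    have := hS.1.eq
    simpa using this
  have hsym : u ⬝ᵥ (S *ᵥ v) = v ⬝ᵥ (S *ᵥ u) := by
    rw [Matrix.dotProduct_mulVec, ← Matrix.mulVec_transpose, hT, dotProduct_comm]
  have key : ∀ t : ℝ, 0 ≤ (v ⬝ᵥ (S *ᵥ v)) * (t * t) + (2 * (u ⬝ᵥ (S *ᵥ v))) * t + (u ⬝ᵥ (S *ᵥ u)) := by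
    intro t
    have h := hS.dotProduct_mulVec_nonneg (u + t • v)
    simp only [star_trivial, mulVec_add, mulVec_smul, dotProduct_add, add_dotProduct,
      dotProduct_smul, smul_dotProduct, smul_eq_mul] at h
    rw [← hsym] at h
    nlinarith [h]
  have hd := discrim_le_zero key
  rw [discrim] at hd
  nlinarith [hd]

lemma cs_dot {d : ℕ} (u v : Fin d → ℝ) : (u ⬝ᵥ v)^2 ≤ (u ⬝ᵥ u) * (v ⬝ᵥ v) := by
  have h := cs_psd (Matrix.PosSemidef.one (n := Fin d) (R := ℝ)) u v
  simpa using h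

lemma dot_self_nonneg {d : ℕ} (x : Fin d → ℝ) : 0 ≤ x ⬝ᵥ x := by
  unfold dotProduct
  exact Finset.sum_nonneg fun i _ => mul_self_nonneg _

lemma norm2_eq {d : ℕ} (x : Fin d → ℝ) : norm2 x = Real.sqrt (x ⬝ᵥ x) := by
  unfold norm2 dotProduct
  congr 1
  exact Finset.sum_congr rfl (fun i _ => sq (x i))

/-- **negated-predicate version after Lemma 3 of the paper.** If for
every row `r` of `F` the endpoint upper-bound margin conditions
`F_r w + g_r + √(F_r S F_rᵀ) + (η+ε)‖F_r‖₂ ≤ 0` hold at both segment endpoints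
`w₀, w₁`, then for every center `c` in the `η`-tube of the segment and every `p` in
the ellipsoid with shape `S` centered at `c`, it holds that
`F_r p + g_r ≤ -ε‖F_r‖₂` for every row `r`. -/
theorem negated_swarm_predicate_along_tube (d l : ℕ)
    (S : Matrix (Fin d) (Fin d) ℝ) (hpd : S.PosDef)
    (F : Matrix (Fin l) (Fin d) ℝ) (g : Fin l → ℝ)
    (w₀ w₁ : Fin d → ℝ) (η ε : ℝ) (hη : 0 ≤ η) (hε : 0 ≤ ε)
    (h₀ : ∀ r : Fin l,
      F r ⬝ᵥ w₀ + g r + Real.sqrt (F r ⬝ᵥ (S *ᵥ F r)) + (η + ε) * norm2 (F r) ≤ 0)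
    (h₁ : ∀ r : Fin l,
      F r ⬝ᵥ w₁ + g r + Real.sqrt (F r ⬝ᵥ (S *ᵥ F r)) + (η + ε) * norm2 (F r) ≤ 0) :
    ∀ c : Fin d → ℝ, nearSegment c w₀ w₁ η →
      ∀ p : Fin d → ℝ, (p - c) ⬝ᵥ (S⁻¹ *ᵥ (p - c)) ≤ 1 →
        ∀ r : Fin l, F r ⬝ᵥ p + g r ≤ -(ε * norm2 (F r)) := by
  intro c hc p hp r
  obtain ⟨γ, hγ0, hγ1, he⟩ := hc
  set m : Fin d → ℝ := γ • w₀ + (1 - γ) • w₁ with hm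
  set v : Fin d → ℝ := F r with hv
  -- decomposition
  have hdec : v ⬝ᵥ p = v ⬝ᵥ (p - c) + v ⬝ᵥ (c - m) + v ⬝ᵥ m := by
    rw [dotProduct_sub, dotProduct_sub]; ring
  -- ellipsoid part
  have hSinv : S *ᵥ (S⁻¹ *ᵥ (p - c)) = p - c := by
    rw [Matrix.mulVec_mulVec, Matrix.mul_nonsing_inv _ (isUnit_iff_ne_zero.mpr hpd.det_pos.ne'), Matrix.one_mulVec]
  have hvSv : 0 ≤ v ⬝ᵥ (S *ᵥ v) := by simpa using hpd.posSemidef.dotProduct_mulVec_nonneg v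
  have hA : v ⬝ᵥ (p - c) ≤ Real.sqrt (v ⬝ᵥ (S *ᵥ v)) := by
    have e1 : v ⬝ᵥ (S *ᵥ (S⁻¹ *ᵥ (p - c))) = v ⬝ᵥ (p - c) := by rw [hSinv]
    have e2 : (S⁻¹ *ᵥ (p - c)) ⬝ᵥ (S *ᵥ (S⁻¹ *ᵥ (p - c))) = (p - c) ⬝ᵥ (S⁻¹ *ᵥ (p - c)) := by
      rw [hSinv, dotProduct_comm]
    have h1 : (v ⬝ᵥ (p - c))^2 ≤ (v ⬝ᵥ (S *ᵥ v)) * ((p - c) ⬝ᵥ (S⁻¹ *ᵥ (p - c))) := by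
      have h := cs_psd hpd.posSemidef v (S⁻¹ *ᵥ (p - c))
      rwa [e1, e2] at h
    have h3 : (v ⬝ᵥ (p - c))^2 ≤ v ⬝ᵥ (S *ᵥ v) := by
      calc (v ⬝ᵥ (p - c))^2 ≤ (v ⬝ᵥ (S *ᵥ v)) * ((p - c) ⬝ᵥ (S⁻¹ *ᵥ (p - c))) := h1
        _ ≤ (v ⬝ᵥ (S *ᵥ v)) * 1 := mul_le_mul_of_nonneg_left hp hvSv
        _ = v ⬝ᵥ (S *ᵥ v) := mul_one _
    calc v ⬝ᵥ (p - c) ≤ |v ⬝ᵥ (p - c)| := le_abs_self _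
      _ = Real.sqrt ((v ⬝ᵥ (p - c))^2) := (Real.sqrt_sq_eq_abs _).symm
      _ ≤ Real.sqrt (v ⬝ᵥ (S *ᵥ v)) := Real.sqrt_le_sqrt h3
  -- tube part
  have hB : v ⬝ᵥ (c - m) ≤ η * norm2 v := by
    have h1 := cs_dot v (c - m)
    have hnv : 0 ≤ norm2 v := Real.sqrt_nonneg _
    have hne : 0 ≤ norm2 (c - m) := Real.sqrt_nonneg _
    have h2 : (v ⬝ᵥ (c - m))^2 ≤ (norm2 v * norm2 (c - m))^2 := by
      rw [mul_pow, norm2_eq, norm2_eq, Real.sq_sqrt (dot_self_nonneg v),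
        Real.sq_sqrt (dot_self_nonneg (c - m))]
      exact h1
    have h3 : v ⬝ᵥ (c - m) ≤ norm2 v * norm2 (c - m) := by
      nlinarith [le_abs_self (v ⬝ᵥ (c - m)), sq_abs (v ⬝ᵥ (c - m)), mul_nonneg hnv hne,
        abs_nonneg (v ⬝ᵥ (c - m))]
    calc v ⬝ᵥ (c - m) ≤ norm2 v * norm2 (c - m) := h3
      _ ≤ norm2 v * η := mul_le_mul_of_nonneg_left he hnv
      _ = η * norm2 v := mul_comm _ _
  -- segment part
  have hC : v ⬝ᵥ m = γ * (v ⬝ᵥ w₀) + (1 - γ) * (v ⬝ᵥ w₁) := by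
    rw [hm, dotProduct_add, dotProduct_smul, dotProduct_smul]
    simp [smul_eq_mul]
  have hcomb : γ * (v ⬝ᵥ w₀) + (1 - γ) * (v ⬝ᵥ w₁) + g r + Real.sqrt (v ⬝ᵥ (S *ᵥ v)) + (η + ε) * norm2 v ≤ 0 := by
    have e0 := h₀ r
    have e1 := h₁ r
    nlinarith [mul_nonneg hγ0 (neg_nonneg.mpr e0), mul_nonneg (by linarith : (0:ℝ) ≤ 1 - γ) (neg_nonneg.mpr e1)]
  rw [hdec]
  linarith [hA, hB]
end

section
/- Let t₀ ≤ t₁ be real numbers, Σ a symmetric positive definite d×d real matrix, and let p, v, c, w : ℝ → ℝᵈ and u : ℝ → ℝᵈ be such that for every t ∈ [t₀, t₁]: p has derivative v(t), c has derivative w(t), and both v and w have derivative u(t) at t. Assume v(t₀) = w(t₀) and (p(t₀) − c(t₀))ᵀ Σ⁻¹ (p(t₀) − c(t₀)) ≤ 1. Then for every t ∈ [t₀, t₁], p(t) − c(t) = p(t₀) − c(t₀) and hence (p(t) − c(t))ᵀ Σ⁻¹ (p(t) − c(t)) ≤ 1. -/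
open Matrix

/-- An agent and the swarm centroid following the same
double-integrator dynamics with the same input and equal initial velocities keep a
constant relative position; hence containment in the ellipsoid of shape `S` is
preserved. -/
theorem same_input_ellipsoid_invariance (d : ℕ) (t₀ t₁ : ℝ) (ht : t₀ ≤ t₁)
    (S : Matrix (Fin d) (Fin d) ℝ) (hpd : S.PosDef)
    (p v c w u : ℝ → (Fin d → ℝ))
    (hp : ∀ t ∈ Set.Icc t₀ t₁, HasDerivAt p (v t) t)
    (hc : ∀ t ∈ Set.Icc t₀ t₁, HasDerivAt c (w t) t)
    (hv : ∀ t ∈ Set.Icc t₀ t₁, HasDerivAt v (u t) t)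
    (hw : ∀ t ∈ Set.Icc t₀ t₁, HasDerivAt w (u t) t)
    (hv0 : v t₀ = w t₀)
    (h0 : (p t₀ - c t₀) ⬝ᵥ (S⁻¹ *ᵥ (p t₀ - c t₀)) ≤ 1) :
    ∀ t ∈ Set.Icc t₀ t₁,
      p t - c t = p t₀ - c t₀ ∧
      (p t - c t) ⬝ᵥ (S⁻¹ *ᵥ (p t - c t)) ≤ 1 := by
  have hvw : ∀ t ∈ Set.Icc t₀ t₁, v t = w t :=
    eq_of_has_deriv_right_eq (f' := u)
      (fun x hx => (hv x (Set.mem_Icc_of_Ico hx)).hasDerivWithinAt)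
      (fun x hx => (hw x (Set.mem_Icc_of_Ico hx)).hasDerivWithinAt)
      (fun x hx => (hv x hx).continuousAt.continuousWithinAt)
      (fun x hx => (hw x hx).continuousAt.continuousWithinAt) hv0
  have hconst : ∀ t ∈ Set.Icc t₀ t₁, p t - c t = p t₀ - c t₀ := by
    apply constant_of_has_deriv_right_zero (f := fun t => p t - c t)
    · exact fun x hx => ((hp x hx).sub (hc x hx)).continuousAt.continuousWithinAt
    · intro x hx
      have : v x - w x = 0 := by
        rw [hvw x (Set.mem_Icc_of_Ico hx)]; simp
      rw [← this]; exact
        (((hp x (Set.mem_Icc_of_Ico hx)).sub (hc x (Set.mem_Icc_of_Ico hx))).hasDerivWithinAt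
          (s := Set.Ici x))
  intro t htm
  refine ⟨hconst t htm, ?_⟩
  rw [hconst t htm]
  exact h0
end

section
/- Let t₀ ≤ t₁ be real numbers, N ≥ 1, Σ a symmetric positive definite d×d real matrix, ζ ≥ 0, and for i = 1,…,N let p_i, v_i : ℝ → ℝᵈ and u : ℝ → ℝᵈ be such that for every t ∈ [t₀, t₁]: p_i has derivative v_i(t) and v_i has derivative u(t) at t (all agents are driven by the same input u). Define the centroid c(t) := (1/N)·∑_{i=1}^N p_i(t). Assume v_i(t₀) = 0 for all i, ‖p_i(t₀) − p_j(t₀)‖₂ ≥ ζ for all i ≠ j, and (p_i(t₀) − c(t₀))ᵀ Σ⁻¹ (p_i(t₀) − c(t₀)) ≤ 1 for all i. Then for all t ∈ [t₀, t₁]: ‖p_i(t) − p_j(t)‖₂ ≥ ζ for all i ≠ j, and (p_i(t) − c(t))ᵀ Σ⁻¹ (p_i(t) − c(t)) ≤ 1 for all i. -/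
open Matrix

private lemma centroid_diff {d N : ℕ} (hN : (N : ℝ) ≠ 0) (x : Fin d → ℝ)
    (f : Fin N → (Fin d → ℝ)) :
    x - (N : ℝ)⁻¹ • ∑ k, f k = (N : ℝ)⁻¹ • ∑ k, (x - f k) := by
  rw [Finset.sum_sub_distrib, Finset.sum_const, smul_sub, Finset.card_univ,
    Fintype.card_fin]
  congr 1
  rw [← Nat.cast_smul_eq_nsmul ℝ, smul_smul, inv_mul_cancel₀ hN, one_smul]

/-- **Theorem 5 of the paper.** Under the common low-level control
(all agents driven by the same input `u`) with zero initial velocities, intra-swarm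
pairwise distances at least `ζ` and containment in the bounding ellipsoid of shape
`S` centered at the swarm centroid are preserved over the whole time interval. -/
theorem low_level_control_invariance (d N : ℕ) (hN : 1 ≤ N)
    (t₀ t₁ : ℝ) (ht : t₀ ≤ t₁)
    (S : Matrix (Fin d) (Fin d) ℝ) (hpd : S.PosDef)
    (ζ : ℝ) (hζ : 0 ≤ ζ)
    (p v : Fin N → ℝ → (Fin d → ℝ)) (u : ℝ → (Fin d → ℝ))
    (hp : ∀ i, ∀ t ∈ Set.Icc t₀ t₁, HasDerivAt (p i) (v i t) t)
    (hv : ∀ i, ∀ t ∈ Set.Icc t₀ t₁, HasDerivAt (v i) (u t) t)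
    (hv0 : ∀ i, v i t₀ = 0)
    (hdist0 : ∀ i j, i ≠ j → norm2 (p i t₀ - p j t₀) ≥ ζ)
    (hell0 : ∀ i,
      (p i t₀ - (N : ℝ)⁻¹ • ∑ k, p k t₀) ⬝ᵥ
        (S⁻¹ *ᵥ (p i t₀ - (N : ℝ)⁻¹ • ∑ k, p k t₀)) ≤ 1) :
    ∀ t ∈ Set.Icc t₀ t₁,
      (∀ i j, i ≠ j → norm2 (p i t - p j t) ≥ ζ) ∧
      (∀ i,
        (p i t - (N : ℝ)⁻¹ • ∑ k, p k t) ⬝ᵥ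
          (S⁻¹ *ᵥ (p i t - (N : ℝ)⁻¹ • ∑ k, p k t)) ≤ 1) := by
  have hN0 : (N : ℝ) ≠ 0 := Nat.cast_ne_zero.mpr (by omega)
  -- pairwise differences are constant on the interval
  have key : ∀ i j, ∀ t ∈ Set.Icc t₀ t₁, p i t - p j t = p i t₀ - p j t₀ := by
    intro i j
    have hvc : ∀ t ∈ Set.Icc t₀ t₁, v i t - v j t = 0 := by
      intro t htmem
      have h := constant_of_has_deriv_right_zero
        (f := fun s => v i s - v j s) (a := t₀) (b := t₁)
        (fun s hs => (((hv i s hs).sub (hv j s hs)).continuousAt).continuousWithinAt)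
        (fun s hs => by
          have hsI : s ∈ Set.Icc t₀ t₁ := Set.Ico_subset_Icc_self hs
          have h := ((hv i s hsI).sub (hv j s hsI)).hasDerivWithinAt (s := Set.Ici s)
          rwa [sub_self] at h)
        t htmem
      simpa [hv0 i, hv0 j] using h
    intro t htmem
    exact constant_of_has_deriv_right_zero
      (f := fun s => p i s - p j s) (a := t₀) (b := t₁)
      (fun s hs => (((hp i s hs).sub (hp j s hs)).continuousAt).continuousWithinAt)
      (fun s hs => by
        have hsI : s ∈ Set.Icc t₀ t₁ := Set.Ico_subset_Icc_self hs
        have h := ((hp i s hsI).sub (hp j s hsI)).hasDerivWithinAt (s := Set.Ici s)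
        rwa [hvc s hsI] at h)
      t htmem
  intro t htmem
  refine ⟨fun i j hij => by rw [key i j t htmem]; exact hdist0 i j hij, fun i => ?_⟩
  have hc : p i t - (N : ℝ)⁻¹ • ∑ k, p k t
      = p i t₀ - (N : ℝ)⁻¹ • ∑ k, p k t₀ := by
    rw [centroid_diff hN0, centroid_diff hN0]
    congr 1
    exact Finset.sum_congr rfl fun k _ => key i k t htmem
  rw [hc]
  exact hell0 i
end
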